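/- For n ≥ 2 and all integers a, b ≥ 0 with a ≤ 2^r, b ≤ 2^r and a·b ≤ 2^r: N_r(a)·N_r(b) ≤ N_r(a·b). -/

import Mathlib

/-- Whether the `j`-th coordinate of the edge `e` equals the distinguished vertex
(the first vertex of its side, representing `v_{j+1} = 1`). -/
def vcond {n r : ℕ} (e : Fin r → Fin n) (j : ℕ) : Bool :=
  if h : j < r then decide ((e ⟨j, h⟩ : ℕ) = 0) else false

/-- The nested condition `v_{j+1} ∈ e σ₁ (v_{j+2} ∈ e σ₂ (⋯))` determined by a
sequence `σ` over `{∧, ∨}` (where `false` encodes `∧` and `true` encodes `∨`). -/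
def edgeCond {n r : ℕ} (e : Fin r → Fin n) : ℕ → List Bool → Bool
  | j, [] => vcond e j
  | j, false :: s => vcond e j && edgeCond e (j + 1) s
  | j, true :: s => vcond e j || edgeCond e (j + 1) s

/-- `F_r(σ)`: the set of edges of `[n]^r` satisfying the nested condition given by `σ`. -/
def Fset (n r : ℕ) (σ : List Bool) : Finset (Fin r → Fin n) :=
  Finset.univ.filter (fun e => edgeCond e 0 σ = true)

/-- `f_r(σ) = |F_r(σ)|`. -/
def fval (n r : ℕ) (σ : List Bool) : ℕ := (Fset n r σ).card

/-- `Ψ_r`: the sequences over `{∧, ∨}` of length at most `r - 1`. -/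
def PsiSet (r : ℕ) : Finset (List Bool) :=
  (Finset.range r).biUnion (fun m => (Finset.univ : Finset (Fin m → Bool)).image List.ofFn)

/-- The set of values `{f_r(σ) : σ ∈ Σ_r}`, where `f_r(α) = 0` and `f_r(ω) = n ^ r`. -/
def Nvals (n r : ℕ) : Finset ℕ :=
  insert 0 (insert (n ^ r) ((PsiSet r).image (fval n r)))

/-- `N_r(i)`: the `(i+1)`-st smallest element of `{f_r(σ) : σ ∈ Σ_r}`. -/
def Nseq (n r i : ℕ) : ℕ := (Finset.sort (Nvals n r) (· ≤ ·)).getD i 0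




/-- binary popcount -/
def pc : ℕ → ℕ
  | 0 => 0
  | (m+1) => pc ((m+1)/2) + (m+1) % 2
decreasing_by exact Nat.div_lt_self (Nat.succ_pos m) one_lt_two

lemma pc_zero : pc 0 = 0 := by rw [pc]

lemma pc_one : pc 1 = 1 := by rw [show (1:ℕ) = 0+1 from rfl, pc]; norm_num [pc_zero]

lemma pc_two_mul (m : ℕ) : pc (2 * m) = pc m := by
  cases m with
  | zero => rfl
  | succ k =>
    show pc (2*(k+1)) = _
    rw [show 2*(k+1) = (2*k+1)+1 by ring, pc]
    have h1 : (2*k+1+1)/2 = k+1 := by omega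
    have h2 : (2*k+1+1) % 2 = 0 := by omega
    rw [h1, h2]
    omega

lemma pc_two_mul_add_one (m : ℕ) : pc (2 * m + 1) = pc m + 1 := by
  rw [show 2*m+1 = (2*m)+1 by rfl, pc]
  congr 1
  · congr 1; omega
  · omega

lemma pc_pow_add (k : ℕ) : ∀ t < 2^k, pc (2^k + t) = pc t + 1 := by
  induction k with
  | zero =>
    intro t ht
    interval_cases t
    show pc (2^0 + 0) = pc 0 + 1
    norm_num [pc_one, pc_zero]
  | succ k ih =>
    intro t ht
    rcases Nat.even_or_odd t with ⟨t', rfl⟩ | ⟨t', rfl⟩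
    · rw [show 2^(k+1) + (t'+t') = 2*(2^k + t') by ring, pc_two_mul,
        show t'+t' = 2*t' by ring, pc_two_mul]
      exact ih t' (by omega)
    · rw [show 2^(k+1) + (2*t'+1) = 2*(2^k + t') + 1 by ring, pc_two_mul_add_one,
        pc_two_mul_add_one]
      rw [ih t' (by omega)]

/-- weight, in terms of q = n - 1 -/
def wt (q j : ℕ) : ℕ := q ^ pc j

/-- M (with q = n-1): ∑_{j<m} q^pc j -/
def Mf (q m : ℕ) : ℕ := ∑ j ∈ Finset.range m, wt q j

lemma Mf_succ (q m : ℕ) : Mf q (m+1) = Mf q m + wt q m := Finset.sum_range_succ _ _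

lemma Mf_zero (q : ℕ) : Mf q 0 = 0 := rfl

lemma wt_pos {q : ℕ} (hq : 1 ≤ q) (j : ℕ) : 0 < wt q j := pow_pos hq _

lemma Mf_strictMono {q : ℕ} (hq : 1 ≤ q) : StrictMono (Mf q) := by
  apply strictMono_nat_of_lt_succ
  intro m
  have := wt_pos hq m
  rw [Mf_succ]; omega

lemma wt_two_mul (q m : ℕ) : wt q (2*m) = wt q m := by rw [wt, pc_two_mul]; rfl

lemma wt_two_mul_add_one (q m : ℕ) : wt q (2*m+1) = q * wt q m := by
  rw [wt, pc_two_mul_add_one, pow_succ, mul_comm]; rfl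

lemma Mf_two_mul (q m : ℕ) : Mf q (2*m) = (q+1) * Mf q m := by
  induction m with
  | zero => simp [Mf]
  | succ k ih =>
    rw [show 2*(k+1) = (2*k+1)+1 by ring, Mf_succ, Mf_succ, ih, Mf_succ,
      wt_two_mul, wt_two_mul_add_one]
    ring

lemma Mf_two_mul_add_one (q m : ℕ) : Mf q (2*m+1) = (q+1) * Mf q m + wt q m := by
  rw [Mf_succ, Mf_two_mul, wt_two_mul]

lemma Mf_one (q : ℕ) : Mf q 1 = 1 := by simp [Mf, wt, pc]

lemma Mf_pow (q k : ℕ) : Mf q (2^k) = (q+1)^k := by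
  induction k with
  | zero => simpa using Mf_one q
  | succ t ih => rw [pow_succ, mul_comm (2^t) 2, Mf_two_mul, ih, pow_succ, mul_comm]

/-- the splitting identity -/
lemma Mf_pow_add (q k : ℕ) : ∀ t ≤ 2^k, Mf q (2^k + t) = (q+1)^k + q * Mf q t := by
  intro t
  induction t with
  | zero => intro _; simpa [Mf_zero] using Mf_pow q k
  | succ t ih =>
    intro ht
    rw [show 2^k + (t+1) = (2^k + t) + 1 by ring, Mf_succ, ih (by omega), Mf_succ]
    have hw : wt q (2^k + t) = q * wt q t := by
      rw [wt, wt, pc_pow_add k t (by omega), pow_succ, mul_comm]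
    rw [hw]; ring

/-- Lemma C: the carry lemma -/
lemma Mf_carry {q : ℕ} (hq : 1 ≤ q) :
    ∀ k x y : ℕ, x ≤ 2^k → y ≤ 2^k → 2^k ≤ x + y →
      Mf q x + Mf q y ≤ (q+1)^k + Mf q (x + y - 2^k) := by
  intro k
  induction k with
  | zero =>
    intro x y hx hy hxy
    interval_cases x <;> interval_cases y <;> simp_all [Mf_zero, Mf_one]
  | succ k ih =>
    -- helper for the mixed case, stated with x odd, y even
    have mixed : ∀ x' y' : ℕ, x' + 1 ≤ 2^k → y' ≤ 2^k → 2^k ≤ x' + y' →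
        Mf q (2*x'+1) + Mf q (2*y') ≤ (q+1)^(k+1) + Mf q (2*(x'+y'-2^k)+1) := by
      intro x' y' hx hy hxy
      set t' := x' + y' - 2^k with ht'
      rw [Mf_two_mul, Mf_two_mul_add_one, Mf_two_mul_add_one]
      rcases le_total (wt q x') (wt q t') with hcmp | hcmp
      · have h := ih x' y' (by omega) hy hxy
        calc (q+1) * Mf q x' + wt q x' + (q+1) * Mf q y'
            ≤ (q+1) * (Mf q x' + Mf q y') + wt q t' := by nlinarith
          _ ≤ (q+1) * ((q+1)^k + Mf q t') + wt q t' := by nlinarith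
          _ = (q+1)^(k+1) + ((q+1) * Mf q t' + wt q t') := by ring
      · have h := ih (x'+1) y' hx hy (by omega)
        have hsum : x' + 1 + y' - 2^k = t' + 1 := by omega
        rw [hsum, Mf_succ, Mf_succ] at h
        -- h : Mf x' + wt x' + Mf y' ≤ (q+1)^k + Mf t' + wt t'
        have h2 := Nat.mul_le_mul_left (q+1) h
        have h3 := Nat.mul_le_mul_left q hcmp
        rw [pow_succ]
        nlinarith [h2, h3]
    intro x y hx hy hxy
    rcases Nat.even_or_odd x with ⟨x', rfl⟩ | ⟨x', rfl⟩ <;>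
      rcases Nat.even_or_odd y with ⟨y', rfl⟩ | ⟨y', rfl⟩
    · -- even, even
      rw [show x'+x' = 2*x' by ring] at *
      rw [show y'+y' = 2*y' by ring] at *
      have h := ih x' y' (by omega) (by omega) (by omega)
      have hsub : 2*x' + 2*y' - 2^(k+1) = 2*(x'+y'-2^k) := by
        have : 2^(k+1) = 2*2^k := by ring
        omega
      rw [hsub, Mf_two_mul, Mf_two_mul, Mf_two_mul, pow_succ, mul_comm ((q+1)^k) (q+1)]
      nlinarith
    · -- x even, y odd : use mixed with roles swapped
      rw [show x'+x' = 2*x' by ring] at *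
      have h := mixed y' x' (by omega) (by omega) (by omega)
      have hsub : 2*x' + (2*y'+1) - 2^(k+1) = 2*(y'+x'-2^k)+1 := by
        have : 2^(k+1) = 2*2^k := by ring
        omega
      rw [hsub]
      rw [add_comm (Mf q (2*x')) (Mf q (2*y'+1))]
      rw [show y' + x' = x' + y' from by ring] at h ⊢
      exact h
    · -- x odd, y even
      rw [show y'+y' = 2*y' by ring] at *
      have h := mixed x' y' (by omega) (by omega) (by omega)
      have hsub : 2*x'+1 + 2*y' - 2^(k+1) = 2*(x'+y'-2^k)+1 := by
        have : 2^(k+1) = 2*2^k := by ring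
        omega
      rw [hsub]
      exact h
    · -- odd odd
      have hx' : x' + 1 ≤ 2^k := by omega
      have hy' : y' + 1 ≤ 2^k := by omega
      have hxy' : 2^k ≤ x' + y' + 1 := by
        have : 2^(k+1) = 2*2^k := by ring
        omega
      have hsub : (2*x'+1) + (2*y'+1) - 2^(k+1) = 2*(x'+y'+1-2^k) := by
        have : 2^(k+1) = 2*2^k := by ring
        omega
      rw [hsub, Mf_two_mul, Mf_two_mul_add_one, Mf_two_mul_add_one]
      -- wlog
      rcases le_total (wt q y') (wt q x') with hcmp | hcmp
      · have h := ih (x'+1) y' hx' (by omega) (by omega)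
        have hs : x' + 1 + y' - 2^k = x' + y' + 1 - 2^k := by omega
        rw [hs, Mf_succ] at h
        -- h : Mf x' + wt x' + Mf y' ≤ (q+1)^k + Mf (x'+y'+1-2^k)
        have hq1 : wt q y' ≤ q * wt q x' := le_trans hcmp (by nlinarith [wt_pos hq x'])
        have := Nat.mul_le_mul_left (q+1) h
        have hexp : (q+1) * (Mf q x' + wt q x' + Mf q y')
            = (q+1)*Mf q x' + (q+1)*Mf q y' + wt q x' + q * wt q x' := by ring
        have hexp2 : (q+1) * ((q+1)^k + Mf q (x'+y'+1-2^k))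
            = (q+1)^(k+1) + (q+1) * Mf q (x'+y'+1-2^k) := by ring
        omega
      · have h := ih (y'+1) x' hy' (by omega) (by omega)
        have hs : y' + 1 + x' - 2^k = x' + y' + 1 - 2^k := by omega
        rw [hs, Mf_succ] at h
        have hq1 : wt q x' ≤ q * wt q y' := le_trans hcmp (by nlinarith [wt_pos hq y'])
        have := Nat.mul_le_mul_left (q+1) h
        have hexp : (q+1) * (Mf q y' + wt q y' + Mf q x')
            = (q+1)*Mf q x' + (q+1)*Mf q y' + wt q y' + q * wt q y' := by ring
        have hexp2 : (q+1) * ((q+1)^k + Mf q (x'+y'+1-2^k))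
            = (q+1)^(k+1) + (q+1) * Mf q (x'+y'+1-2^k) := by ring
        omega

lemma two_pow_succ' (k : ℕ) : (2:ℕ)^(k+1) = 2*2^k := by rw [pow_succ]; ring

lemma exists_top_bit {y : ℕ} (hy : 0 < y) : ∃ k, 2^k ≤ y ∧ y < 2*2^k := by
  refine ⟨Nat.log 2 y, Nat.pow_log_le_self 2 (by omega), ?_⟩
  have := Nat.lt_pow_succ_log_self (show 1 < 2 by norm_num) y
  rw [pow_succ] at this
  omega

lemma Mf_superadd {q : ℕ} (hq : 1 ≤ q) : ∀ x y : ℕ, Mf q x + Mf q y ≤ Mf q (x + y) := by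
  have key : ∀ s x y : ℕ, x + y ≤ s → Mf q x + Mf q y ≤ Mf q (x + y) := by
    intro s
    induction s with
    | zero =>
      intro x y h
      have hx : x = 0 := by omega
      have hy : y = 0 := by omega
      simp [hx, hy, Mf_zero]
    | succ s ih =>
      suffices H : ∀ x y : ℕ, x + y ≤ s + 1 → x ≤ y → Mf q x + Mf q y ≤ Mf q (x + y) by
        intro x y hs
        rcases le_total x y with h | h
        · exact H x y hs h
        · have := H y x (by omega) h
          rw [add_comm x y]
          omega
      intro x y hs hxy
      rcases Nat.eq_zero_or_pos y with hy | hy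
      · have hx : x = 0 := by omega
        simp [hx, hy, Mf_zero]
      obtain ⟨k, hk1, hk2⟩ := exists_top_bit hy
      have hpk : 0 < 2^k := pow_pos (by norm_num) k
      obtain ⟨y₀, rfl⟩ : ∃ y₀, y = 2^k + y₀ := ⟨y - 2^k, by omega⟩
      have hy₀ : y₀ < 2^k := by omega
      have hPP : (q+1)^(k+1) = q*(q+1)^k + (q+1)^k := by rw [pow_succ]; ring
      have hP : (q+1)^k ≤ q*(q+1)^k := Nat.le_mul_of_pos_left _ (by omega)
      rcases le_or_gt (x + y₀) (2^k) with hca | hcb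
      · -- case a : no carry into the top bit
        rw [show x + (2^k + y₀) = 2^k + (x+y₀) by ring, Mf_pow_add q k _ hca,
          Mf_pow_add q k y₀ hy₀.le]
        have h1 := ih x y₀ (by omega)
        have h3 := Nat.mul_le_mul_left q h1
        rw [mul_add] at h3
        have h2 : Mf q x ≤ q * Mf q x := Nat.le_mul_of_pos_left _ (by omega)
        omega
      rcases le_or_gt x (2^k) with hxa | hxb
      · -- case b : carry, x small
        obtain ⟨t, ht⟩ : ∃ t, x + y₀ = 2^k + t := ⟨x + y₀ - 2^k, by omega⟩
        have htlt : t < 2^k := by omega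
        rw [show x + (2^k + y₀) = 2^(k+1) + t by rw [two_pow_succ']; omega,
          Mf_pow_add q (k+1) t (by rw [two_pow_succ']; omega),
          Mf_pow_add q k y₀ hy₀.le]
        have hcar := Mf_carry hq k x y₀ hxa hy₀.le (by omega)
        rw [show x + y₀ - 2^k = t by omega] at hcar
        have h3 := Nat.mul_le_mul_left q hcar
        rw [mul_add, mul_add] at h3
        have h2 : Mf q x ≤ q * Mf q x := Nat.le_mul_of_pos_left _ (by omega)
        rw [hPP]
        omega
      · -- case c : both big
        obtain ⟨x₀, rfl⟩ : ∃ x₀, x = 2^k + x₀ := ⟨x - 2^k, by omega⟩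
        have hx₀ : x₀ < 2^k := by omega
        rw [show 2^k + x₀ + (2^k + y₀) = 2^(k+1) + (x₀ + y₀) by rw [two_pow_succ']; ring,
          Mf_pow_add q (k+1) _ (by rw [two_pow_succ']; omega),
          Mf_pow_add q k x₀ hx₀.le, Mf_pow_add q k y₀ hy₀.le]
        have h1 := ih x₀ y₀ (by omega)
        have h3 := Nat.mul_le_mul_left q h1
        rw [mul_add] at h3
        rw [hPP]
        omega
  intro x y
  exact key (x+y) x y le_rfl

lemma Mf_B {q : ℕ} (hq : 1 ≤ q) :
    ∀ u v : ℕ, v ≤ u → Mf q u + q * Mf q v ≤ Mf q (u + v) := by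
  intro u
  induction u using Nat.strong_induction_on with
  | _ u IH =>
  intro v hvu
  rcases Nat.eq_zero_or_pos u with hu | hu
  · have : v = 0 := by omega
    simp [hu, this, Mf_zero]
  obtain ⟨k, hk1, hk2⟩ := exists_top_bit hu
  have hpk : 0 < 2^k := pow_pos (by norm_num) k
  obtain ⟨u₀, rfl⟩ : ∃ u₀, u = 2^k + u₀ := ⟨u - 2^k, by omega⟩
  have hu₀ : u₀ < 2^k := by omega
  have hPP : (q+1)^(k+1) = q*(q+1)^k + (q+1)^k := by rw [pow_succ]; ring
  rcases le_or_gt (2^k) v with hva | hvb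
  · -- v ≥ 2^k
    obtain ⟨v₀, rfl⟩ : ∃ v₀, v = 2^k + v₀ := ⟨v - 2^k, by omega⟩
    have hv₀ : v₀ ≤ u₀ := by omega
    rw [show 2^k + u₀ + (2^k + v₀) = 2^(k+1) + (u₀ + v₀) by rw [two_pow_succ']; ring,
      Mf_pow_add q (k+1) _ (by rw [two_pow_succ']; omega),
      Mf_pow_add q k u₀ hu₀.le, Mf_pow_add q k v₀ (by omega)]
    have h1 := IH u₀ (by omega) v₀ hv₀
    have h3 := Nat.mul_le_mul_left q h1
    rw [mul_add] at h3
    rw [mul_add, hPP]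
    omega
  rcases le_or_gt (u₀ + v) (2^k) with hca | hcb
  · -- no carry
    rw [show 2^k + u₀ + v = 2^k + (u₀ + v) by ring, Mf_pow_add q k _ hca,
      Mf_pow_add q k u₀ hu₀.le]
    have h1 := Mf_superadd hq u₀ v
    have h3 := Nat.mul_le_mul_left q h1
    rw [mul_add] at h3
    omega
  · -- carry
    obtain ⟨t, ht⟩ : ∃ t, u₀ + v = 2^k + t := ⟨u₀ + v - 2^k, by omega⟩
    have htlt : t < 2^k := by omega
    rw [show 2^k + u₀ + v = 2^(k+1) + t by rw [two_pow_succ']; omega,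
      Mf_pow_add q (k+1) t (by rw [two_pow_succ']; omega),
      Mf_pow_add q k u₀ hu₀.le]
    have hcar := Mf_carry hq k u₀ v hu₀.le (by omega) (by omega)
    rw [show u₀ + v - 2^k = t by omega] at hcar
    have h3 := Nat.mul_le_mul_left q hcar
    rw [mul_add, mul_add] at h3
    rw [hPP]
    omega

lemma Mf_pow_mul (q k a : ℕ) : Mf q (2^k * a) = (q+1)^k * Mf q a := by
  induction k with
  | zero => simp
  | succ t ih =>
    rw [show 2^(t+1) * a = 2*(2^t*a) by rw [two_pow_succ']; ring, Mf_two_mul, ih, pow_succ]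
    ring

lemma Mf_mul {q : ℕ} (hq : 1 ≤ q) : ∀ b a : ℕ, Mf q a * Mf q b ≤ Mf q (a * b) := by
  intro b
  induction b using Nat.strong_induction_on with
  | _ b IH =>
  intro a
  rcases Nat.eq_zero_or_pos b with hb | hb
  · simp [hb, Mf_zero]
  obtain ⟨k, hk1, hk2⟩ := exists_top_bit hb
  have hpk : 0 < 2^k := pow_pos (by norm_num) k
  obtain ⟨b₀, rfl⟩ : ∃ b₀, b = 2^k + b₀ := ⟨b - 2^k, by omega⟩
  have hb₀ : b₀ < 2^k := by omega
  rw [Mf_pow_add q k b₀ hb₀.le]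
  have h1 := IH b₀ (by omega) a
  have h2 : a * b₀ ≤ 2^k * a := by
    calc a * b₀ ≤ a * 2^k := Nat.mul_le_mul_left a hb₀.le
    _ = 2^k * a := by ring
  have h3 := Mf_B hq (2^k * a) (a * b₀) h2
  rw [Mf_pow_mul] at h3
  have e1 : a * (2^k + b₀) = 2^k * a + a * b₀ := by ring
  rw [e1]
  calc Mf q a * ((q+1)^k + q * Mf q b₀)
      = (q+1)^k * Mf q a + q * (Mf q a * Mf q b₀) := by ring
    _ ≤ (q+1)^k * Mf q a + q * Mf q (a * b₀) := by
        have := Nat.mul_le_mul_left q h1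
        omega
    _ ≤ Mf q (2^k * a + a * b₀) := h3

lemma vcond_tail {n r : ℕ} (e : Fin (r+1) → Fin n) (j : ℕ) :
    vcond e (j+1) = vcond (Fin.tail e) j := by
  unfold vcond
  by_cases h : j < r
  · rw [dif_pos (by omega), dif_pos h]
    congr 1
  · rw [dif_neg (by omega), dif_neg h]

lemma edgeCond_tail {n r : ℕ} (σ : List Bool) :
    ∀ (e : Fin (r+1) → Fin n) (j : ℕ), edgeCond e (j+1) σ = edgeCond (Fin.tail e) j σ := by
  induction σ with
  | nil => intro e j; exact vcond_tail e j
  | cons b s ih =>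
    intro e j
    cases b <;> simp only [edgeCond, vcond_tail, ih]

lemma vcond_zero {n r : ℕ} (e : Fin (r+1) → Fin n) :
    vcond e 0 = decide ((e 0 : ℕ) = 0) := by
  unfold vcond
  rw [dif_pos (Nat.succ_pos r)]
  rfl

/-- master counting lemma -/
lemma card_cons_filter {n r : ℕ} (P : (Fin (r+1) → Fin n) → Prop) [DecidablePred P]
    (p : Fin n → Prop) [DecidablePred p] (Q : (Fin r → Fin n) → Prop) [DecidablePred Q]
    (hP : ∀ e, P e ↔ p (e 0) ∧ Q (Fin.tail e)) :
    (Finset.univ.filter P).card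
      = (Finset.univ.filter p).card * (Finset.univ.filter Q).card := by
  rw [← Finset.card_product]
  refine Finset.card_bij' (fun e _ => (e 0, Fin.tail e)) (fun pr _ => Fin.cons pr.1 pr.2)
    ?_ ?_ ?_ ?_
  · intro e he
    simp only [Finset.mem_filter, Finset.mem_univ, true_and] at he
    rw [hP e] at he
    simp only [Finset.mem_product, Finset.mem_filter, Finset.mem_univ, true_and]
    exact ⟨he.1, he.2⟩
  · intro pr hpr
    simp only [Finset.mem_product, Finset.mem_filter, Finset.mem_univ, true_and] at hpr
    simp only [Finset.mem_filter, Finset.mem_univ, true_and]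
    rw [hP]
    simpa using hpr
  · intro e _
    exact Fin.cons_self_tail e
  · intro pr _
    simp

lemma card_fun_eq (n r : ℕ) : (Finset.univ : Finset (Fin r → Fin n)).card = n ^ r := by
  rw [Finset.card_univ]
  simp

lemma card_zero_cond {n : ℕ} (hn : 1 ≤ n) :
    (Finset.univ.filter fun x : Fin n => (x : ℕ) = 0).card = 1 := by
  have : (Finset.univ.filter fun x : Fin n => (x : ℕ) = 0) = {⟨0, hn⟩} := by
    ext x
    simp only [Finset.mem_filter, Finset.mem_univ, true_and, Finset.mem_singleton]
    constructor
    · intro hx; exact Fin.ext hx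
    · intro hx; subst hx; rfl
  rw [this, Finset.card_singleton]

lemma card_ne_zero_cond {n : ℕ} (hn : 1 ≤ n) :
    (Finset.univ.filter fun x : Fin n => ¬((x : ℕ) = 0)).card = n - 1 := by
  have h := Finset.card_filter_add_card_filter_not
    (s := (Finset.univ : Finset (Fin n))) (p := fun x : Fin n => (x : ℕ) = 0)
  rw [Finset.card_univ, Fintype.card_fin, card_zero_cond hn] at h
  omega

lemma card_trivial_Q (n r : ℕ) :
    (Finset.univ.filter fun _ : Fin r → Fin n => True).card = n ^ r := by
  simp [card_fun_eq]

lemma fval_nil (n r : ℕ) (hn : 1 ≤ n) : fval n (r+1) [] = n ^ r := by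
  unfold fval Fset
  rw [card_cons_filter _ (fun x : Fin n => (x:ℕ) = 0) (fun _ => True)
    (by intro e; simp [edgeCond, vcond_zero])]
  rw [card_zero_cond hn, card_trivial_Q, one_mul]

lemma fval_false (n r : ℕ) (σ : List Bool) (hn : 1 ≤ n) :
    fval n (r+1) (false :: σ) = fval n r σ := by
  unfold fval Fset
  rw [card_cons_filter _ (fun x : Fin n => (x:ℕ) = 0) (fun f => edgeCond f 0 σ = true)
    (by intro e
        simp only [edgeCond, Bool.and_eq_true, vcond_zero, decide_eq_true_eq,
          show (0:ℕ)+1 = 1 from rfl, edgeCond_tail σ e 0])]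
  rw [card_zero_cond hn, one_mul]

lemma fval_true (n r : ℕ) (σ : List Bool) (hn : 1 ≤ n) :
    fval n (r+1) (true :: σ) = n ^ r + (n-1) * fval n r σ := by
  unfold fval Fset
  have hsplit : (Finset.univ.filter fun e : Fin (r+1) → Fin n => edgeCond e 0 (true :: σ) = true)
      = (Finset.univ.filter fun e : Fin (r+1) → Fin n => (e 0 : ℕ) = 0)
        ∪ (Finset.univ.filter fun e : Fin (r+1) → Fin n =>
            ¬((e 0 : ℕ) = 0) ∧ edgeCond (Fin.tail e) 0 σ = true) := by
    rw [← Finset.filter_or]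
    apply Finset.filter_congr
    intro e _
    simp only [edgeCond, Bool.or_eq_true, vcond_zero, decide_eq_true_eq,
      show (0:ℕ)+1 = 1 from rfl, edgeCond_tail σ e 0, eq_iff_iff]
    tauto
  rw [hsplit, Finset.card_union_of_disjoint]
  · congr 1
    · rw [card_cons_filter _ (fun x : Fin n => (x:ℕ) = 0) (fun _ => True) (by intro e; simp)]
      rw [card_zero_cond hn, card_trivial_Q, one_mul]
    · rw [card_cons_filter _ (fun x : Fin n => ¬((x:ℕ) = 0))
        (fun f => edgeCond f 0 σ = true) (by intro e; simp)]
      rw [card_ne_zero_cond hn]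
  · rw [Finset.disjoint_filter]
    intro e _ h1 h2
    exact h2.1 h1

/-- binary code of a sequence -/
def code : ℕ → List Bool → ℕ
  | 0, _ => 0
  | r+1, [] => 2^r
  | r+1, false :: σ => code r σ
  | r+1, true :: σ => 2^r + code r σ

lemma code_bounds : ∀ (σ : List Bool) (r : ℕ), σ.length < r →
    0 < code r σ ∧ code r σ < 2^r := by
  intro σ
  induction σ with
  | nil =>
    intro r hr
    obtain ⟨r', rfl⟩ : ∃ r', r = r'+1 := ⟨r-1, by omega⟩
    constructor
    · exact pow_pos (by norm_num) r'
    · rw [pow_succ]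
      have := pow_pos (show 0 < 2 by norm_num) r'
      show code (r'+1) [] < 2^r' * 2
      unfold code
      omega
  | cons b σ ih =>
    intro r hr
    obtain ⟨r', rfl⟩ : ∃ r', r = r'+1 := ⟨r-1, by omega⟩
    have hlen : σ.length < r' := by simpa using hr
    have h := ih r' hlen
    cases b
    · show 0 < code r' σ ∧ code r' σ < 2^(r'+1)
      rw [pow_succ]
      omega
    · show 0 < 2^r' + code r' σ ∧ 2^r' + code r' σ < 2^(r'+1)
      rw [pow_succ]
      have := pow_pos (show 0 < 2 by norm_num) r'
      omega

lemma fval_eq_Mf {n : ℕ} (hn : 1 ≤ n) : ∀ (σ : List Bool) (r : ℕ), σ.length < r →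
    fval n r σ = Mf (n-1) (code r σ) := by
  intro σ
  induction σ with
  | nil =>
    intro r hr
    obtain ⟨r', rfl⟩ : ∃ r', r = r'+1 := ⟨r-1, by omega⟩
    show fval n (r'+1) [] = Mf (n-1) (code (r'+1) [])
    rw [fval_nil n r' hn]
    show (n:ℕ)^r' = Mf (n-1) (2^r')
    rw [Mf_pow]
    congr 1
    omega
  | cons b σ ih =>
    intro r hr
    obtain ⟨r', rfl⟩ : ∃ r', r = r'+1 := ⟨r-1, by omega⟩
    have hlen : σ.length < r' := by simpa using hr
    have hb := code_bounds σ r' hlen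
    cases b
    · show fval n (r'+1) (false :: σ) = Mf (n-1) (code r' σ)
      rw [fval_false n r' σ hn, ih r' hlen]
    · show fval n (r'+1) (true :: σ) = Mf (n-1) (2^r' + code r' σ)
      rw [fval_true n r' σ hn, ih r' hlen, Mf_pow_add (n-1) r' _ (by omega)]
      congr 2
      omega

lemma code_surj : ∀ (r t : ℕ), 0 < t → t < 2^r →
    ∃ σ : List Bool, σ.length < r ∧ code r σ = t := by
  intro r
  induction r with
  | zero => intro t h1 h2; simp at h2; omega
  | succ r ih =>
    intro t h1 h2
    rcases lt_trichotomy t (2^r) with h | h | h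
    · obtain ⟨σ, hl, hc⟩ := ih t h1 h
      exact ⟨false :: σ, by simpa using hl, hc⟩
    · refine ⟨[], by simp, ?_⟩
      rw [code]
      omega
    · obtain ⟨σ, hl, hc⟩ := ih (t - 2^r) (by omega)
        (by rw [pow_succ] at h2; omega)
      refine ⟨true :: σ, by simpa using hl, ?_⟩
      show 2^r + code r σ = t
      omega

lemma mem_PsiSet {r : ℕ} {σ : List Bool} : σ ∈ PsiSet r ↔ σ.length < r := by
  unfold PsiSet
  simp only [Finset.mem_biUnion, Finset.mem_range, Finset.mem_image, Finset.mem_univ, true_and]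
  constructor
  · rintro ⟨m, hm, f, rfl⟩
    simpa using hm
  · intro h
    exact ⟨σ.length, h, σ.get, List.ofFn_get σ⟩

lemma Nvals_eq_image {n r : ℕ} (hn : 1 ≤ n) :
    Nvals n r = (Finset.range (2^r + 1)).image (Mf (n-1)) := by
  ext x
  unfold Nvals
  simp only [Finset.mem_insert, Finset.mem_image, Finset.mem_range]
  constructor
  · rintro (rfl | rfl | ⟨σ, hσ, rfl⟩)
    · exact ⟨0, by positivity, rfl⟩
    · refine ⟨2^r, by omega, ?_⟩
      rw [Mf_pow]
      congr 1
      omega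
    · rw [mem_PsiSet] at hσ
      have hb := code_bounds σ r hσ
      exact ⟨code r σ, by omega, (fval_eq_Mf hn σ r hσ).symm⟩
  · rintro ⟨i, hi, rfl⟩
    rcases Nat.eq_zero_or_pos i with rfl | hpos
    · left; rfl
    rcases eq_or_lt_of_le (show i ≤ 2^r by omega) with rfl | hlt
    · right; left
      rw [Mf_pow]
      congr 1
      omega
    · right; right
      obtain ⟨σ, hl, hc⟩ := code_surj r i hpos hlt
      exact ⟨σ, mem_PsiSet.mpr hl, by rw [fval_eq_Mf hn σ r hl, hc]⟩

lemma sort_Nvals {n r : ℕ} (hn : 2 ≤ n) :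
    Finset.sort (Nvals n r) (· ≤ ·) = (List.range (2^r + 1)).map (Mf (n-1)) := by
  have hq : 1 ≤ n - 1 := by omega
  have hsm := Mf_strictMono hq
  have hperm : List.Perm (Finset.sort (Nvals n r) (· ≤ ·)) ((List.range (2^r + 1)).map (Mf (n-1))) := by
    apply List.perm_of_nodup_nodup_toFinset_eq
    · exact Finset.sort_nodup _ _
    · exact List.nodup_range.map hsm.injective
    · rw [Finset.sort_toFinset, Nvals_eq_image (show 1 ≤ n by omega)]
      ext x
      simp
  have hs2 : List.Pairwise (· ≤ ·) ((List.range (2^r + 1)).map (Mf (n-1))) := by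
    refine List.Pairwise.map _ (fun a b hab => (hsm hab).le) ?_
    exact List.pairwise_lt_range
  exact List.Perm.eq_of_pairwise' (Finset.pairwise_sort _ _) hs2 hperm

lemma Nseq_eq_Mf {n r i : ℕ} (hn : 2 ≤ n) (hi : i ≤ 2^r) :
    Nseq n r i = Mf (n-1) i := by
  unfold Nseq
  rw [sort_Nvals hn]
  have hlen : i < ((List.range (2^r + 1)).map (Mf (n-1))).length := by
    simpa using by omega
  rw [List.getD_eq_getElem _ _ hlen]
  simp

theorem stmt12 (n r a b : ℕ) (hn : 2 ≤ n) (ha : a ≤ 2 ^ r) (hb : b ≤ 2 ^ r)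
    (hab : a * b ≤ 2 ^ r) :
    Nseq n r a * Nseq n r b ≤ Nseq n r (a * b) := by
  have hq : 1 ≤ n - 1 := by omega
  rw [Nseq_eq_Mf hn ha, Nseq_eq_Mf hn hb, Nseq_eq_Mf hn hab]
  exact Mf_mul hq b a
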